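/- arXiv:2303.11871 — 4 statements merged into one kernel-verified Lean document; each statement's English description precedes it below -/
import Mathlib

section
/- Let p ≥ 1 and let K ⊆ ℂ^p be a compact set. Then K is determining (i.e. no nonzero polynomial in p complex variables vanishes identically on K) if and only if V_j(K) ≠ 0 for every j ≥ 1, where V_j(K) = max{ |vdm(ξ_0,…,ξ_{j−1})| : ξ_0,…,ξ_{j−1} ∈ K }. -/
open scoped BigOperators
open Filter

namespace PseudoLeja

/-- Graded lexicographic strict order on multi-indices in `ℕ^p`:
`α ≺ β` iff `|α| < |β|`, or `|α| = |β|` and the leftmost nonzero entry of `α - β`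
is negative (i.e. at the first index where they differ, `α` is smaller). -/
def GLexLT {p : ℕ} (α β : Fin p → ℕ) : Prop :=
  (∑ i, α i) < (∑ i, β i) ∨
    ((∑ i, α i) = (∑ i, β i) ∧ ∃ k, (∀ i, i < k → α i = β i) ∧ α k < β k)

/-- `κ : ℕ → ℕ^p` is the (unique) enumeration of all multi-indices that is strictly
increasing from the usual order on `ℕ` to the graded lexicographic order. -/
def IsGLexEnum {p : ℕ} (κ : ℕ → Fin p → ℕ) : Prop :=
  Function.Bijective κ ∧ ∀ m n : ℕ, m < n → GLexLT (κ m) (κ n)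

/-- The `N`-th monomial `e_N(z) = z^{κ(N)}`. -/
noncomputable def mono {p : ℕ} (κ : ℕ → Fin p → ℕ) (N : ℕ) (z : Fin p → ℂ) : ℂ :=
  ∏ i, z i ^ κ N i

/-- Vandermonde determinant of the points `ξ 0, …, ξ (n-1)`:
`vdm κ n ξ = det [e_N(ξ_M)]_{0 ≤ M, N ≤ n-1}`. -/
noncomputable def vdm {p : ℕ} (κ : ℕ → Fin p → ℕ) (n : ℕ) (ξ : ℕ → Fin p → ℂ) : ℂ :=
  Matrix.det (Matrix.of fun M N : Fin n => mono κ (N : ℕ) (ξ (M : ℕ)))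

/-- A set `K ⊆ ℂ^p` is determining if no nonzero polynomial in `p` complex
variables vanishes identically on `K`. -/
def Determining {p : ℕ} (K : Set (Fin p → ℂ)) : Prop :=
  ∀ P : MvPolynomial (Fin p) ℂ, (∀ z ∈ K, MvPolynomial.eval z P = 0) → P = 0

/-- `h_d = C(p+d, d)`, the dimension of the space of polynomials of total degree
at most `d` in `p` variables. -/
def hdim (p d : ℕ) : ℕ := Nat.choose (p + d) d

/-- `l_d = p·C(p+d, p+1)`, the degree of the Vandermonde determinant of `h_d` points. -/
def ldim (p d : ℕ) : ℕ := p * Nat.choose (p + d) (p + 1)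

/-- `V_j(K)`, the maximal modulus of the Vandermonde determinant of `j` points of `K`. -/
noncomputable def Vsup {p : ℕ} (κ : ℕ → Fin p → ℕ) (K : Set (Fin p → ℂ)) (j : ℕ) : ℝ :=
  sSup { v : ℝ | ∃ ξ : ℕ → Fin p → ℂ, (∀ i, ξ i ∈ K) ∧ v = ‖vdm κ j ξ‖ }

/-- `(ξ_j)_{j≥0} ⊆ K` is a pseudo Leja sequence for `K` with Edrei growth `(M_j)_{j≥1}`:
`M_j ≥ 1`, `M_j·|vdm(ξ_0,…,ξ_j)| ≥ max_{z∈K} |vdm(ξ_0,…,ξ_{j-1},z)|` for `j ≥ 1`, and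
`lim_{d→∞} (max_{h_{d-1} ≤ j < h_d} M_j)^{1/d} = 1`. -/
def IsPseudoLeja {p : ℕ} (κ : ℕ → Fin p → ℕ) (K : Set (Fin p → ℂ))
    (ξ : ℕ → Fin p → ℂ) (M : ℕ → ℝ) : Prop :=
  (∀ j, ξ j ∈ K) ∧
  (∀ j, 1 ≤ j → 1 ≤ M j) ∧
  (∀ j, 1 ≤ j → ∀ z ∈ K,
    ‖vdm κ (j + 1) (Function.update ξ j z)‖ ≤
      M j * ‖vdm κ (j + 1) ξ‖) ∧
  Filter.Tendsto
    (fun d : ℕ => (sSup (M '' Set.Ico (hdim p (d - 1)) (hdim p d))) ^ ((d : ℝ)⁻¹))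
    Filter.atTop (nhds 1)

variable {p : ℕ}

noncomputable def kf (κ : ℕ → Fin p → ℕ) (N : ℕ) : Fin p →₀ ℕ :=
  Finsupp.equivFunOnFinite.symm (κ N)

lemma kf_apply (κ : ℕ → Fin p → ℕ) (N : ℕ) (i : Fin p) : kf κ N i = κ N i := rfl

lemma prod_pow_kf (κ : ℕ → Fin p → ℕ) (N : ℕ) (z : Fin p → ℂ) :
    (∏ i, z i ^ (kf κ N) i) = mono κ N z := rfl

lemma eval_monomial_kf (κ : ℕ → Fin p → ℕ) (N : ℕ) (z : Fin p → ℂ) :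
    MvPolynomial.eval z (MvPolynomial.monomial (kf κ N) (1 : ℂ)) = mono κ N z := by
  rw [MvPolynomial.eval_monomial, one_mul, Finsupp.prod_fintype]
  · rfl
  · intro i; exact pow_zero _

lemma bddAbove_vdm_set (κ : ℕ → Fin p → ℕ) {K : Set (Fin p → ℂ)} (hK : IsCompact K) (n : ℕ) :
    BddAbove { v : ℝ | ∃ ξ : ℕ → Fin p → ℂ, (∀ i, ξ i ∈ K) ∧ v = ‖vdm κ n ξ‖ } := by
  set G : (Fin n → (Fin p → ℂ)) → ℝ :=
    fun t => ‖Matrix.det (Matrix.of fun M N : Fin n => mono κ (N : ℕ) (t M))‖ with hGdef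
  have hG : Continuous G := by
    apply continuous_norm.comp
    apply Continuous.matrix_det
    apply continuous_pi; intro M; apply continuous_pi; intro N
    simp only [Matrix.of_apply]
    unfold mono
    apply continuous_finset_prod
    intro i _
    have h1 : Continuous fun t : Fin n → (Fin p → ℂ) => t M i :=
      (continuous_apply i).comp (continuous_apply M)
    exact h1.pow _
  have hT : IsCompact (Set.univ.pi fun _ : Fin n => K) := isCompact_univ_pi fun _ => hK
  refine BddAbove.mono ?_ (hT.image hG).bddAbove
  rintro v ⟨ξ, hξ, rfl⟩
  exact ⟨fun M => ξ (M : ℕ), fun M _ => hξ _, rfl⟩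


/-- The enumeration of finsupp multi-indices induced by a bijective `κ`. -/
noncomputable def kEquiv (κ : ℕ → Fin p → ℕ) (hκ : Function.Bijective κ) :
    ℕ ≃ (Fin p →₀ ℕ) :=
  (Equiv.ofBijective κ hκ).trans Finsupp.equivFunOnFinite.symm

lemma kEquiv_apply (κ : ℕ → Fin p → ℕ) (hκ : Function.Bijective κ) (N : ℕ) :
    kEquiv κ hκ N = kf κ N := rfl

lemma eval_eq_sum_mono (κ : ℕ → Fin p → ℕ) (hκ : Function.Bijective κ)
    (P : MvPolynomial (Fin p) ℂ) (n : ℕ)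
    (hsupp : P.support ⊆ (Finset.range (n+1)).image (kEquiv κ hκ)) (z : Fin p → ℂ) :
    MvPolynomial.eval z P
      = ∑ N : Fin (n+1), MvPolynomial.coeff (kf κ (N : ℕ)) P * mono κ (N : ℕ) z := by
  rw [Fin.sum_univ_eq_sum_range
    (fun N => MvPolynomial.coeff (kf κ N) P * mono κ N z) (n+1)]
  rw [MvPolynomial.eval_eq' z P,
    Finset.sum_subset hsupp (fun d _ hd => by
      rw [MvPolynomial.notMem_support_iff.mp hd, zero_mul]),
    Finset.sum_image (fun x _ y _ h => (kEquiv κ hκ).injective h)]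
  rfl

lemma exists_vdm_eq_zero (κ : ℕ → Fin p → ℕ) (hκ : Function.Bijective κ)
    {K : Set (Fin p → ℂ)} {P : MvPolynomial (Fin p) ℂ} (hP0 : P ≠ 0)
    (hPv : ∀ z ∈ K, MvPolynomial.eval z P = 0) :
    ∃ n : ℕ, ∀ ξ : ℕ → Fin p → ℂ, (∀ i, ξ i ∈ K) → vdm κ (n+1) ξ = 0 := by
  classical
  set e := kEquiv κ hκ with he
  have hs : (P.support.image e.symm).Nonempty := by
    refine Finset.image_nonempty.mpr ?_
    exact Finset.nonempty_iff_ne_empty.mpr (fun h => hP0 (MvPolynomial.support_eq_empty.mp h))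
  set n := (P.support.image e.symm).max' hs with hn
  refine ⟨n, fun ξ hξ => ?_⟩
  have hsupp : P.support ⊆ (Finset.range (n+1)).image e := by
    intro d hd
    refine Finset.mem_image.mpr ⟨e.symm d, ?_, e.apply_symm_apply d⟩
    refine Finset.mem_range.mpr (Nat.lt_succ_of_le ?_)
    exact (P.support.image e.symm).le_max' _ (Finset.mem_image_of_mem _ hd)
  rw [vdm, ← Matrix.exists_mulVec_eq_zero_iff]
  refine ⟨fun N => MvPolynomial.coeff (kf κ (N : ℕ)) P, ?_, ?_⟩
  · -- nonzero: at N = last, coeff (kf κ n) P ≠ 0 since kf κ n ∈ support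
    obtain ⟨d, hd, hdn⟩ := Finset.mem_image.mp ((P.support.image e.symm).max'_mem hs)
    have hkn : kf κ n = d := by
      rw [← kEquiv_apply κ hκ, hn, ← hdn, e.apply_symm_apply]
    intro h
    have := congrFun h (Fin.last n)
    simp only [Fin.val_last, Pi.zero_apply] at this
    rw [hkn] at this
    exact MvPolynomial.mem_support_iff.mp hd this
  · funext M
    have := hPv (ξ (M : ℕ)) (hξ _)
    rw [eval_eq_sum_mono κ hκ P n hsupp (ξ (M : ℕ))] at this
    rw [Matrix.mulVec, Pi.zero_apply]
    rw [← this]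
    simp [dotProduct, mul_comm]


lemma kf_injective {κ : ℕ → Fin p → ℕ} (hκ : Function.Injective κ) :
    Function.Injective (kf κ) :=
  fun a b h => hκ (Finsupp.equivFunOnFinite.symm.injective h)

lemma exists_vdm_ne_zero (κ : ℕ → Fin p → ℕ) (hκ : Function.Injective κ)
    {K : Set (Fin p → ℂ)} (hne : K.Nonempty) (hdet : Determining K) :
    ∀ n : ℕ, ∃ ξ : ℕ → Fin p → ℂ, (∀ i, ξ i ∈ K) ∧ vdm κ n ξ ≠ 0 := by
  classical
  intro n
  induction n with
  | zero =>
    obtain ⟨z, hz⟩ := hne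
    exact ⟨fun _ => z, fun _ => hz, by simp [vdm]⟩
  | succ n ih =>
    obtain ⟨ξ, hξK, hξ⟩ := ih
    set A : Matrix (Fin (n+1)) (Fin (n+1)) (MvPolynomial (Fin p) ℂ) :=
      Matrix.of (fun M N : Fin (n+1) =>
        if (M : ℕ) = n then MvPolynomial.monomial (kf κ (N : ℕ)) (1 : ℂ)
        else MvPolynomial.C (mono κ (N : ℕ) (ξ (M : ℕ)))) with hA
    set Q : MvPolynomial (Fin p) ℂ := A.det with hQ
    have evalQ : ∀ z : Fin p → ℂ,
        MvPolynomial.eval z Q = vdm κ (n+1) (Function.update ξ n z) := by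
      intro z
      rw [hQ, RingHom.map_det (MvPolynomial.eval z) A, vdm]
      congr 1
      ext M N
      simp only [RingHom.mapMatrix_apply, Matrix.map_apply, hA, Matrix.of_apply]
      by_cases h : (M : ℕ) = n
      · rw [if_pos h, eval_monomial_kf, h, Function.update_self]
      · rw [if_neg h, MvPolynomial.eval_C, Function.update_of_ne h]
    have coeffQ : MvPolynomial.coeff (kf κ n) Q = vdm κ n ξ := by
      rw [hQ, Matrix.det_succ_row A (Fin.last n)]
      have hterm : ∀ N : Fin (n+1),
          (-1 : MvPolynomial (Fin p) ℂ) ^ ((Fin.last n : ℕ) + (N : ℕ)) * A (Fin.last n) N *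
            (A.submatrix (Fin.last n).succAbove N.succAbove).det
          = MvPolynomial.monomial (kf κ (N : ℕ))
              ((-1 : ℂ) ^ (n + (N : ℕ)) *
                Matrix.det (Matrix.of fun M' N' : Fin n =>
                  mono κ ((N.succAbove N' : ℕ)) (ξ (M' : ℕ)))) := by
        intro N
        have hsub : (A.submatrix (Fin.last n).succAbove N.succAbove)
            = (MvPolynomial.C : ℂ →+* MvPolynomial (Fin p) ℂ).mapMatrix
                (Matrix.of fun M' N' : Fin n =>
                  mono κ ((N.succAbove N' : ℕ)) (ξ (M' : ℕ))) := by
          ext M' N'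
          simp only [Matrix.submatrix_apply, RingHom.mapMatrix_apply, Matrix.map_apply,
            Matrix.of_apply, hA, Fin.succAbove_last]
          rw [if_neg]
          simp only [Fin.coe_castSucc]
          exact Nat.ne_of_lt M'.isLt
        rw [hsub, ← RingHom.map_det, hA]
        simp only [Matrix.of_apply, Fin.val_last, eq_self_iff_true, if_true]
        rw [show ((-1 : MvPolynomial (Fin p) ℂ)) ^ (n + (N : ℕ))
            = MvPolynomial.C ((-1 : ℂ) ^ (n + (N : ℕ))) by
          rw [map_pow, map_neg, map_one]]
        rw [MvPolynomial.C_mul_monomial, mul_one, mul_comm, MvPolynomial.C_mul_monomial,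
          mul_comm]
      rw [Finset.sum_congr rfl (fun N _ => hterm N), MvPolynomial.coeff_sum]
      rw [Finset.sum_eq_single (Fin.last n)]
      · simp only [Fin.val_last]
        rw [MvPolynomial.coeff_monomial, if_pos rfl]
        have heven : Even (n + n) := Even.add_self n
        rw [heven.neg_one_pow, one_mul, vdm]
        congr 1
        ext M' N'
        simp [Fin.succAbove_last]
      · intro N _ hN
        rw [MvPolynomial.coeff_monomial, if_neg]
        intro h
        apply hN
        have : (N : ℕ) = n := hκ (Finsupp.equivFunOnFinite.symm.injective h)
        exact Fin.ext (by simpa using this)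
      · intro h
        exact absurd (Finset.mem_univ _) h
    -- Q ≠ 0
    have hQ0 : Q ≠ 0 := fun h => hξ (by rw [← coeffQ, h, MvPolynomial.coeff_zero])
    have : ¬ (∀ z ∈ K, MvPolynomial.eval z Q = 0) := fun h => hQ0 (hdet Q h)
    push_neg at this
    obtain ⟨z, hzK, hz⟩ := this
    refine ⟨Function.update ξ n z, ?_, ?_⟩
    · intro i
      by_cases h : i = n
      · rw [h, Function.update_self]; exact hzK
      · rw [Function.update_of_ne h]; exact hξK i
    · rw [← evalQ z]
      exact hz


/-- a compact set `K ⊆ ℂ^p` is determining iff `V_j(K) ≠ 0` for every `j ≥ 1`. -/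
theorem determining_iff_Vsup_ne_zero {p : ℕ} (hp : 1 ≤ p)
    (κ : ℕ → Fin p → ℕ) (hκ : IsGLexEnum κ)
    (K : Set (Fin p → ℂ)) (hK : IsCompact K) :
    Determining K ↔ ∀ j : ℕ, 1 ≤ j → Vsup κ K j ≠ 0 := by
  classical
  constructor
  · intro hdet j hj
    have hne : K.Nonempty := by
      by_contra h
      rw [Set.not_nonempty_iff_eq_empty] at h
      subst h
      exact one_ne_zero (hdet 1 (fun z hz => absurd hz (Set.notMem_empty z)))
    obtain ⟨ξ, hξK, hξ⟩ := exists_vdm_ne_zero κ hκ.1.injective hne hdet j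
    have hmem : ‖vdm κ j ξ‖ ∈
        { v : ℝ | ∃ ξ : ℕ → Fin p → ℂ, (∀ i, ξ i ∈ K) ∧ v = ‖vdm κ j ξ‖ } :=
      ⟨ξ, hξK, rfl⟩
    have hle : ‖vdm κ j ξ‖ ≤ Vsup κ K j :=
      le_csSup (bddAbove_vdm_set κ hK j) hmem
    have hpos : 0 < ‖vdm κ j ξ‖ := norm_pos_iff.mpr hξ
    exact ne_of_gt (lt_of_lt_of_le hpos hle)
  · intro hV
    intro P hPv
    by_contra hP0
    obtain ⟨n, hzero⟩ := exists_vdm_eq_zero κ hκ.1 hP0 hPv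
    refine hV (n+1) (Nat.succ_le_succ (Nat.zero_le n)) ?_
    have hsub : { v : ℝ | ∃ ξ : ℕ → Fin p → ℂ,
        (∀ i, ξ i ∈ K) ∧ v = ‖vdm κ (n+1) ξ‖ } ⊆ {0} := by
      rintro v ⟨ξ, hξ, rfl⟩
      simp [hzero ξ hξ]
    rcases Set.subset_singleton_iff_eq.mp hsub with h | h
    · rw [Vsup, h, Real.sSup_empty]
    · rw [Vsup, h, csSup_singleton]

end PseudoLeja
end

section
/- Let p ≥ 1, h_d = C(p+d, d) and l_d = p·C(p+d, p+1). If (M_j)_{j≥1} is a sequence of real numbers with M_j ≥ 1 for all j and lim_{d→∞} (max_{h_{d−1}≤j<h_d} M_j)^{1/d} = 1, then lim_{d→∞} (∏_{j=1}^{h_d−1} M_j)^{1/l_d} = 1. -/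
open scoped BigOperators
open Filter

namespace PseudoLeja

lemma hdim_lt_succ {p : ℕ} (hp : 1 ≤ p) (d : ℕ) : hdim p d < hdim p (d + 1) := by
  have h0 : p + (d + 1) = (p + d) + 1 := by omega
  have h1 : hdim p (d + 1) = Nat.choose (p + d) d + Nat.choose (p + d) (d + 1) := by
    rw [hdim, h0, Nat.choose_succ_succ' (p + d) d]
  have h2 : 0 < Nat.choose (p + d) (d + 1) := Nat.choose_pos (by omega)
  rw [hdim, h1]; omega

lemma one_le_hdim (p d : ℕ) : 1 ≤ hdim p d := Nat.choose_pos (Nat.le_add_left d p)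

lemma mul_choose_eq (q d : ℕ) :
    (q + 1) * Nat.choose (q + d + 1) (q + 1) = (d + 1) * Nat.choose (q + d + 1) (d + 1) := by
  have h1 := Nat.add_one_mul_choose_eq (q + d) q
  have h2 := Nat.add_one_mul_choose_eq (q + d) d
  have h3 : Nat.choose (q + d) q = Nat.choose (q + d) d := by
    have := Nat.choose_symm (n := q + d) (k := q) (by omega)
    simpa [show q + d - q = d by omega] using this.symm
  rw [mul_comm, ← h1, h3, h2, mul_comm]

lemma ldim_succ {p : ℕ} (hp : 1 ≤ p) (d : ℕ) :
    ldim p (d + 1) = ldim p d + (d + 1) * (hdim p (d + 1) - hdim p d) := by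
  obtain ⟨q, rfl⟩ : ∃ q, p = q + 1 := ⟨p - 1, by omega⟩
  have hΔ : hdim (q + 1) (d + 1) - hdim (q + 1) d = Nat.choose (q + d + 1) (d + 1) := by
    have h0 : q + 1 + (d + 1) = (q + d + 1) + 1 := by omega
    have h1 : hdim (q + 1) (d + 1) = Nat.choose (q + d + 1) d + Nat.choose (q + d + 1) (d + 1) := by
      rw [hdim, h0, Nat.choose_succ_succ' (q + d + 1) d]
    have h2 : hdim (q + 1) d = Nat.choose (q + d + 1) d := by
      rw [hdim]; congr 1; omega
    omega
  rw [hΔ, ← mul_choose_eq]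
  have h0 : q + 1 + (d + 1) = (q + d + 1) + 1 := by omega
  have h1 : Nat.choose (q + 1 + (d + 1)) (q + 2) =
      Nat.choose (q + d + 1) (q + 1) + Nat.choose (q + d + 1) (q + 2) := by
    rw [h0, Nat.choose_succ_succ' (q + d + 1) (q + 1)]
  have h2 : ldim (q + 1) d = (q + 1) * Nat.choose (q + d + 1) (q + 2) := by
    rw [ldim]; congr 2; omega
  rw [ldim, h1, h2]; ring

lemma ldim_eq_sum {p : ℕ} (hp : 1 ≤ p) (d : ℕ) :
    ldim p d = ∑ e ∈ Finset.Ico 1 (d + 1), e * (hdim p e - hdim p (e - 1)) := by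
  induction d with
  | zero =>
      simp [ldim, Nat.choose_eq_zero_of_lt (by omega : p + 0 < p + 1)]
  | succ d ih =>
      rw [Finset.sum_Ico_succ_top (by omega), ← ih, ldim_succ hp d]
      simp

lemma le_ldim {p : ℕ} (hp : 1 ≤ p) (d : ℕ) : d ≤ ldim p d := by
  rcases Nat.eq_zero_or_pos d with rfl | hd
  · exact Nat.zero_le _
  · rw [ldim_eq_sum hp d]
    calc d = d * 1 := (mul_one d).symm
    _ ≤ d * (hdim p d - hdim p (d - 1)) := by
        have : hdim p (d - 1) < hdim p d := by
          have := hdim_lt_succ hp (d - 1)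
          simpa [Nat.sub_add_cancel hd] using this
        exact Nat.mul_le_mul_left d (by omega)
    _ ≤ _ := Finset.single_le_sum (f := fun e => e * (hdim p e - hdim p (e - 1)))
          (fun i _ => Nat.zero_le _) (by simp [Finset.mem_Ico]; omega)

lemma cesaro_weighted (a w : ℕ → ℝ) (ha0 : ∀ e, 1 ≤ e → 0 ≤ a e) (hw0 : ∀ e, 0 ≤ w e)
    (ha : Tendsto a atTop (nhds 0))
    (hW : Tendsto (fun d => ∑ e ∈ Finset.Ico 1 (d + 1), w e) atTop atTop) :
    Tendsto (fun d => (∑ e ∈ Finset.Ico 1 (d + 1), w e * a e) /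
      (∑ e ∈ Finset.Ico 1 (d + 1), w e)) atTop (nhds 0) := by
  set W : ℕ → ℝ := fun d => ∑ e ∈ Finset.Ico 1 (d + 1), w e with hWdef
  set A : ℕ → ℝ := fun d => ∑ e ∈ Finset.Ico 1 (d + 1), w e * a e with hAdef
  have hA0 : ∀ d, 0 ≤ A d := fun d =>
    Finset.sum_nonneg fun e he => mul_nonneg (hw0 e) (ha0 e (Finset.mem_Ico.1 he).1)
  have hW0 : ∀ d, 0 ≤ W d := fun d => Finset.sum_nonneg fun e _ => hw0 e
  rw [Metric.tendsto_atTop]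
  intro ε hε
  obtain ⟨E, hE⟩ := Metric.tendsto_atTop.1 ha (ε / 2) (half_pos hε)
  set C : ℝ := ∑ e ∈ Finset.Ico 1 (E + 1), w e * a e with hCdef
  have hC0 : 0 ≤ C :=
    Finset.sum_nonneg fun e he => mul_nonneg (hw0 e) (ha0 e (Finset.mem_Ico.1 he).1)
  obtain ⟨N, hN⟩ := (Filter.eventually_atTop).1 (hW.eventually_ge_atTop (2 * C / ε + 1))
  refine ⟨max N E, fun d hd => ?_⟩
  have hdN : N ≤ d := le_trans (le_max_left _ _) hd
  have hdE : E ≤ d := le_trans (le_max_right _ _) hd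
  have hWd : 2 * C / ε + 1 ≤ W d := hN d hdN
  have hWpos : 0 < W d := lt_of_lt_of_le (by positivity) hWd
  have hsplit : A d = C + ∑ e ∈ Finset.Ico (E + 1) (d + 1), w e * a e := by
    rw [hAdef, hCdef]
    exact (Finset.sum_Ico_consecutive _ (by omega) (by omega)).symm
  have htail : ∑ e ∈ Finset.Ico (E + 1) (d + 1), w e * a e ≤ ε / 2 * W d := by
    calc ∑ e ∈ Finset.Ico (E + 1) (d + 1), w e * a e
        ≤ ∑ e ∈ Finset.Ico (E + 1) (d + 1), w e * (ε / 2) := by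
          refine Finset.sum_le_sum fun e he => ?_
          have he' : E ≤ e := by have := (Finset.mem_Ico.1 he).1; omega
          have : a e < ε / 2 := by
            have := hE e he'
            rw [Real.dist_eq, sub_zero] at this
            exact lt_of_le_of_lt (le_abs_self _) this
          exact mul_le_mul_of_nonneg_left this.le (hw0 e)
      _ = (∑ e ∈ Finset.Ico (E + 1) (d + 1), w e) * (ε / 2) := by
          rw [Finset.sum_mul]
      _ ≤ W d * (ε / 2) := by
          refine mul_le_mul_of_nonneg_right ?_ (by positivity)
          refine Finset.sum_le_sum_of_subset_of_nonneg ?_ fun e _ _ => hw0 e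
          apply Finset.Ico_subset_Ico <;> omega
      _ = ε / 2 * W d := mul_comm _ _
  have hAd : A d ≤ C + ε / 2 * W d := by rw [hsplit]; linarith
  have hCW : C / W d < ε / 2 := by
    rw [div_lt_iff₀ hWpos]
    have h1 : ε / 2 * (2 * C / ε + 1) = C + ε / 2 := by field_simp
    nlinarith
  rw [Real.dist_eq, sub_zero, abs_of_nonneg (div_nonneg (hA0 d) (hW0 d))]
  calc A d / W d ≤ (C + ε / 2 * W d) / W d := by
        exact div_le_div_of_nonneg_right hAd hWpos.le |>.trans_eq rfl
    _ = C / W d + ε / 2 := by rw [add_div, mul_div_assoc, div_self hWpos.ne', mul_one]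
    _ < ε / 2 + ε / 2 := by linarith
    _ = ε := by ring

/-- if `(M_j)` satisfies the Edrei growth condition, then
`(∏_{j=1}^{h_d-1} M_j)^{1/l_d} → 1`. -/
theorem prod_edrei_growth_tendsto_one {p : ℕ} (hp : 1 ≤ p) (M : ℕ → ℝ)
    (hM : ∀ j : ℕ, 1 ≤ j → 1 ≤ M j)
    (hgrowth : Filter.Tendsto
      (fun d : ℕ => (sSup (M '' Set.Ico (hdim p (d - 1)) (hdim p d))) ^ ((d : ℝ)⁻¹))
      Filter.atTop (nhds 1)) :
    Filter.Tendsto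
      (fun d : ℕ => (∏ j ∈ Finset.Ico 1 (hdim p d), M j) ^ (((ldim p d : ℝ))⁻¹))
      Filter.atTop (nhds 1) := by
  set S : ℕ → ℝ := fun e => sSup (M '' Set.Ico (hdim p (e - 1)) (hdim p e)) with hSdef
  have hS1 : ∀ e, 1 ≤ e → 1 ≤ S e := by
    intro e he
    have hlt : hdim p (e - 1) < hdim p e := by
      have := hdim_lt_succ hp (e - 1); rwa [Nat.sub_add_cancel he] at this
    have hmem : M (hdim p (e - 1)) ∈ M '' Set.Ico (hdim p (e - 1)) (hdim p e) :=
      ⟨hdim p (e - 1), ⟨le_refl _, hlt⟩, rfl⟩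
    have hbdd : BddAbove (M '' Set.Ico (hdim p (e - 1)) (hdim p e)) :=
      ((Set.finite_Ico _ _).image M).bddAbove
    exact le_trans (hM _ (one_le_hdim p (e - 1))) (le_csSup hbdd hmem)
  have hMleS : ∀ e, 1 ≤ e → ∀ j, hdim p (e - 1) ≤ j → j < hdim p e → M j ≤ S e := by
    intro e he j h1 h2
    exact le_csSup ((Set.finite_Ico _ _).image M).bddAbove ⟨j, ⟨h1, h2⟩, rfl⟩
  set a : ℕ → ℝ := fun e => (e : ℝ)⁻¹ * Real.log (S e) with hadef
  have ha0 : ∀ e, 1 ≤ e → 0 ≤ a e := fun e he =>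
    mul_nonneg (by positivity) (Real.log_nonneg (hS1 e he))
  have ha : Tendsto a atTop (nhds 0) := by
    have hcomp : Tendsto (fun d : ℕ => Real.log (S d ^ ((d : ℝ)⁻¹))) atTop (nhds 0) := by
      have := (Real.continuousAt_log one_ne_zero).tendsto.comp hgrowth
      simpa [Function.comp_def] using this
    refine hcomp.congr' ?_
    filter_upwards [eventually_ge_atTop 1] with e he
    rw [hadef, Real.log_rpow (lt_of_lt_of_le one_pos (hS1 e he))]
  set w : ℕ → ℝ := fun e => ((e * (hdim p e - hdim p (e - 1)) : ℕ) : ℝ) with hwdef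
  have hw0 : ∀ e, 0 ≤ w e := fun e => Nat.cast_nonneg _
  have hWeq : ∀ d, ∑ e ∈ Finset.Ico 1 (d + 1), w e = (ldim p d : ℝ) := by
    intro d
    rw [ldim_eq_sum hp d, Nat.cast_sum]
  have hW : Tendsto (fun d => ∑ e ∈ Finset.Ico 1 (d + 1), w e) atTop atTop := by
    apply tendsto_atTop_mono (f := fun d : ℕ => (d : ℝ)) ?_ tendsto_natCast_atTop_atTop
    intro d
    rw [hWeq d]
    show (d : ℝ) ≤ (ldim p d : ℝ)
    exact_mod_cast le_ldim hp d
  set L : ℕ → ℝ := fun d => ∑ j ∈ Finset.Ico 1 (hdim p d), Real.log (M j) with hLdef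
  have hL0 : ∀ d, 0 ≤ L d := fun d =>
    Finset.sum_nonneg fun j hj => Real.log_nonneg (hM j (Finset.mem_Ico.1 hj).1)
  have hLbound : ∀ d, L d ≤ ∑ e ∈ Finset.Ico 1 (d + 1), w e * a e := by
    intro d
    have key : ∀ d, L d ≤ ∑ e ∈ Finset.Ico 1 (d + 1),
        ((hdim p e - hdim p (e - 1) : ℕ) : ℝ) * Real.log (S e) := by
      intro d
      induction d with
      | zero => simp [hLdef, hdim]
      | succ d ih =>
          have hsplit : L (d + 1) = L d +
              ∑ j ∈ Finset.Ico (hdim p d) (hdim p (d + 1)), Real.log (M j) := by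
            rw [hLdef]
            exact (Finset.sum_Ico_consecutive _ (one_le_hdim p d) (hdim_lt_succ hp d).le).symm
          have hblock : ∑ j ∈ Finset.Ico (hdim p d) (hdim p (d + 1)), Real.log (M j) ≤
              ((hdim p (d + 1) - hdim p d : ℕ) : ℝ) * Real.log (S (d + 1)) := by
            have hcardle := Finset.sum_le_card_nsmul (Finset.Ico (hdim p d) (hdim p (d + 1)))
              (fun j => Real.log (M j)) (Real.log (S (d + 1))) ?_
            · rw [Nat.card_Ico, nsmul_eq_mul] at hcardle
              exact hcardle
            · intro j hj
              obtain ⟨hj1, hj2⟩ := Finset.mem_Ico.1 hj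
              have hj0 : 1 ≤ j := le_trans (one_le_hdim p d) hj1
              refine Real.log_le_log (lt_of_lt_of_le one_pos (hM j hj0)) ?_
              exact hMleS (d + 1) (by omega) j (by simpa using hj1) hj2
          rw [Finset.sum_Ico_succ_top (by omega : 1 ≤ d + 1), hsplit]
          have : hdim p (d + 1 - 1) = hdim p d := by norm_num
          rw [this]
          exact add_le_add ih hblock
    refine le_trans (key d) (le_of_eq (Finset.sum_congr rfl fun e he => ?_))
    obtain ⟨he1, _⟩ := Finset.mem_Ico.1 he
    have he0 : (e : ℝ) ≠ 0 := by positivity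
    rw [hwdef, hadef]
    push_cast
    field_simp
  have hLdiv : Tendsto (fun d => L d / (ldim p d : ℝ)) atTop (nhds 0) := by
    have hces := cesaro_weighted a w ha0 hw0 ha hW
    refine squeeze_zero' ?_ ?_ hces
    · exact Eventually.of_forall fun d => div_nonneg (hL0 d) (Nat.cast_nonneg _)
    · refine Eventually.of_forall fun d => ?_
      rw [hWeq d]
      exact div_le_div_of_nonneg_right (hLbound d) (Nat.cast_nonneg _)
  have hfin : Tendsto (fun d => Real.exp (L d / (ldim p d : ℝ))) atTop (nhds 1) := by
    have := (Real.continuous_exp.tendsto 0).comp hLdiv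
    simpa [Function.comp_def] using this
  refine hfin.congr fun d => ?_
  have hP1 : 1 ≤ ∏ j ∈ Finset.Ico 1 (hdim p d), M j := by
    have := Finset.prod_le_prod (s := Finset.Ico 1 (hdim p d)) (f := fun _ => (1 : ℝ))
      (g := M) (fun i _ => zero_le_one) (fun i hi => hM i (Finset.mem_Ico.1 hi).1)
    simpa using this
  have hPpos : 0 < ∏ j ∈ Finset.Ico 1 (hdim p d), M j := lt_of_lt_of_le one_pos hP1
  rw [Real.rpow_def_of_pos hPpos, Real.log_prod
    (fun j hj => ne_of_gt (lt_of_lt_of_le one_pos (hM j (Finset.mem_Ico.1 hj).1)))]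
  rw [div_eq_mul_inv]


end PseudoLeja
end

section
/- Let K ⊆ ℂ^p be a determining compact set and let (ξ_j)_{j≥0} be a pseudo Leja sequence for K with Edrei growth (M_j)_{j≥1}. Then for every k ≥ 1, (∏_{j=1}^{k−1} M_j)·|vdm(ξ_0,…,ξ_{k−1})| ≥ ∏_{j=1}^{k−1} θ_j(K), where θ_j(K) = inf{ max_{z∈K} |e_j(z) + ∑_{i=0}^{j−1} c_i e_i(z)| : c_0,…,c_{j−1} ∈ ℂ }. In particular, V_{h_d}(K) ≥ |vdm(ξ_0,…,ξ_{h_d−1})| ≥ (∏_{j=1}^{h_d−1} M_j)^{−1}·∏_{j=1}^{h_d−1} θ_j(K) for every d ≥ 1. -/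
open scoped BigOperators
open Filter

namespace PseudoLeja

/-- `θ_j(K) = inf { max_{z∈K} |e_j(z) + ∑_{i<j} c_i e_i(z)| : c_0,…,c_{j-1} ∈ ℂ }`,
the `|κ(j)|`-th power of the `j`-th Chebyshev constant of `K`. -/
noncomputable def cheb {p : ℕ} (κ : ℕ → Fin p → ℕ) (K : Set (Fin p → ℂ)) (j : ℕ) : ℝ :=
  sInf { r : ℝ | ∃ c : ℕ → ℂ,
    r = sSup { s : ℝ | ∃ z ∈ K,
      s = ‖mono κ j z + ∑ i ∈ Finset.range j, c i * mono κ i z‖ } }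

-- auxiliary lemmas

lemma glex_not_lt_zero {p : ℕ} (α : Fin p → ℕ) : ¬ GLexLT α (fun _ => 0) := by
  rintro (h | ⟨hs, k, -, hk⟩)
  · simp at h
  · simp at hk

lemma kappa_zero {p : ℕ} {κ : ℕ → Fin p → ℕ} (hκ : IsGLexEnum κ) : κ 0 = fun _ => 0 := by
  obtain ⟨m, hm⟩ := hκ.1.2 (fun _ => 0)
  rcases Nat.eq_zero_or_pos m with h | h
  · rw [h] at hm; exact hm
  · exact absurd (hm ▸ hκ.2 0 m h) (glex_not_lt_zero _)

lemma mono_zero {p : ℕ} {κ : ℕ → Fin p → ℕ} (hκ : IsGLexEnum κ) (z : Fin p → ℂ) :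
    mono κ 0 z = 1 := by
  have h := kappa_zero hκ
  simp [mono, h]

lemma vdm_one {p : ℕ} {κ : ℕ → Fin p → ℕ} (hκ : IsGLexEnum κ) (ξ : ℕ → Fin p → ℂ) :
    vdm κ 1 ξ = 1 := by
  rw [vdm, Matrix.det_fin_one]
  simpa using mono_zero hκ (ξ 0)

lemma cheb_nonneg {p : ℕ} (κ : ℕ → Fin p → ℕ) (K : Set (Fin p → ℂ)) (j : ℕ) :
    0 ≤ cheb κ K j := by
  refine Real.sInf_nonneg ?_
  rintro r ⟨c, rfl⟩
  refine Real.sSup_nonneg ?_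
  rintro s ⟨z, hz, rfl⟩
  exact norm_nonneg _

lemma mono_continuous {p : ℕ} (κ : ℕ → Fin p → ℕ) (N : ℕ) : Continuous (mono κ N) :=
  continuous_finset_prod _ (fun i _ => (continuous_apply i).pow _)

lemma vdm_bdd {p : ℕ} (κ : ℕ → Fin p → ℕ) {K : Set (Fin p → ℂ)} (hKc : IsCompact K)
    (n : ℕ) :
    BddAbove {v : ℝ | ∃ ξ : ℕ → Fin p → ℂ, (∀ i, ξ i ∈ K) ∧ v = ‖vdm κ n ξ‖} := by
  choose C hC using fun N : Fin n =>
    hKc.exists_bound_of_continuousOn (mono_continuous κ (N : ℕ)).continuousOn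
  refine ⟨(Fintype.card (Equiv.Perm (Fin n)) : ℝ) * ∏ N : Fin n, max (C N) 0, ?_⟩
  rintro v ⟨η, hη, rfl⟩
  rw [vdm, Matrix.det_apply']
  calc ‖∑ σ : Equiv.Perm (Fin n),
        ((Equiv.Perm.sign σ : ℤ) : ℂ) * ∏ i, (Matrix.of fun M N : Fin n =>
          mono κ (N : ℕ) (η (M : ℕ))) (σ i) i‖
      ≤ ∑ σ : Equiv.Perm (Fin n), ‖((Equiv.Perm.sign σ : ℤ) : ℂ) *
          ∏ i, (Matrix.of fun M N : Fin n => mono κ (N : ℕ) (η (M : ℕ))) (σ i) i‖ :=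
        norm_sum_le _ _
    _ ≤ ∑ _σ : Equiv.Perm (Fin n), ∏ N : Fin n, max (C N) 0 := by
        refine Finset.sum_le_sum fun σ _ => ?_
        rw [norm_mul, norm_prod]
        have hsgn : ‖((Equiv.Perm.sign σ : ℤ) : ℂ)‖ = 1 := by
          rcases Int.units_eq_one_or (Equiv.Perm.sign σ) with h | h <;> simp [h]
        rw [hsgn, one_mul]
        refine Finset.prod_le_prod (fun i _ => norm_nonneg _) fun i _ => ?_
        exact le_trans (hC i (η (σ i)) (hη _)) (le_max_left _ _)
    _ = (Fintype.card (Equiv.Perm (Fin n)) : ℝ) * ∏ N : Fin n, max (C N) 0 := by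
        rw [Finset.sum_const, Finset.card_univ, nsmul_eq_mul]

lemma key {p : ℕ} (κ : ℕ → Fin p → ℕ) (K : Set (Fin p → ℂ))
    (ξ : ℕ → Fin p → ℂ) (k : ℕ) (R : ℝ) (hR : 0 ≤ R)
    (hstep : ∀ z ∈ K, ‖vdm κ (k + 1) (Function.update ξ k z)‖ ≤ R) :
    cheb κ K k * ‖vdm κ k ξ‖ ≤ R := by
  set D : ℂ := vdm κ k ξ with hDdef
  by_cases hD : D = 0
  · rw [hD]; simpa using hR
  -- minors (independent of z)
  set B : Fin (k + 1) → Matrix (Fin k) (Fin k) ℂ := fun j =>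
    Matrix.of fun M N : Fin k => mono κ ((j.succAbove N : Fin (k + 1)) : ℕ) (ξ (M : ℕ)) with hB
  have hBlast : (B (Fin.last k)).det = D := by
    rw [hDdef, vdm]
    congr 1
    ext M N
    simp [hB, Fin.succAbove_last]
  -- expansion along the last row
  have hexp : ∀ z : Fin p → ℂ, vdm κ (k + 1) (Function.update ξ k z) =
      ∑ j : Fin (k + 1), (-1 : ℂ) ^ (k + (j : ℕ)) * mono κ (j : ℕ) z * (B j).det := by
    intro z
    rw [vdm, Matrix.det_succ_row _ (Fin.last k)]
    refine Finset.sum_congr rfl fun j _ => ?_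
    have hsub : (Matrix.of fun M N : Fin (k + 1) =>
        mono κ (N : ℕ) (Function.update ξ k z (M : ℕ))).submatrix
          (Fin.last k).succAbove j.succAbove = B j := by
      ext M N
      have hMk : (M : ℕ) ≠ k := Nat.ne_of_lt M.isLt
      simp [hB, Matrix.submatrix_apply, Fin.succAbove_last, Fin.coe_castSucc,
        Function.update_of_ne hMk]
    rw [hsub, Fin.val_last]
    congr 1
    simp
  -- the coefficients
  set c : ℕ → ℂ := fun i =>
    if h : i < k then ((-1 : ℂ) ^ (k + i) * (B ⟨i, Nat.lt_succ_of_lt h⟩).det) / D else 0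
    with hc
  have hiden : ∀ z : Fin p → ℂ,
      D * (mono κ k z + ∑ i ∈ Finset.range k, c i * mono κ i z) =
        vdm κ (k + 1) (Function.update ξ k z) := by
    intro z
    rw [hexp z, Fin.sum_univ_castSucc, mul_add, Finset.mul_sum,
      ← Fin.sum_univ_eq_sum_range (fun i => D * (c i * mono κ i z)) k]
    have hlastterm : (-1 : ℂ) ^ (k + ((Fin.last k : Fin (k + 1)) : ℕ)) *
        mono κ ((Fin.last k : Fin (k + 1)) : ℕ) z * (B (Fin.last k)).det =
          D * mono κ k z := by
      rw [Fin.val_last, hBlast, Even.neg_one_pow ⟨k, rfl⟩, one_mul, mul_comm]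
    rw [hlastterm]
    conv_rhs => rw [add_comm]
    congr 1
    refine Finset.sum_congr rfl fun i _ => ?_
    have h2 : ((Fin.castSucc i : Fin (k + 1)) : ℕ) = (i : ℕ) := Fin.coe_castSucc i
    rw [h2]
    have h3 : c (i : ℕ) =
        ((-1 : ℂ) ^ (k + (i : ℕ)) * (B (Fin.castSucc i)).det) / D := by
      simp only [hc, i.isLt, dif_pos]
      rfl
    rw [h3]
    field_simp
  -- bound the Chebyshev-type sup
  have habs : (0:ℝ) < ‖D‖ := by
    simpa [norm_pos_iff] using hD
  have hsup : sSup { s : ℝ | ∃ z ∈ K,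
      s = ‖mono κ k z + ∑ i ∈ Finset.range k, c i * mono κ i z‖ } ≤
        R / ‖D‖ := by
    refine Real.sSup_le ?_ (div_nonneg hR (norm_nonneg _))
    rintro s ⟨z, hz, rfl⟩
    rw [div_eq_inv_mul, ← inv_mul_le_iff₀ (by positivity), inv_inv, ← norm_mul, hiden z]
    exact hstep z hz
  have hcheb : cheb κ K k ≤ R / ‖D‖ := by
    refine le_trans (csInf_le ?_ ⟨c, rfl⟩) hsup
    refine ⟨0, ?_⟩
    rintro r ⟨c', rfl⟩
    refine Real.sSup_nonneg ?_
    rintro s ⟨z, hz, rfl⟩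
    exact norm_nonneg _
  calc cheb κ K k * ‖D‖ ≤ (R / ‖D‖) * ‖D‖ :=
        mul_le_mul_of_nonneg_right hcheb (norm_nonneg _)
    _ = R := div_mul_cancel₀ _ (ne_of_gt habs)



/-- for a pseudo Leja sequence,
`(∏_{j=1}^{k-1} M_j)·|vdm(ξ_0,…,ξ_{k-1})| ≥ ∏_{j=1}^{k-1} θ_j(K)` for every `k ≥ 1`;
in particular `V_{h_d}(K) ≥ |vdm(ξ_0,…,ξ_{h_d-1})| ≥ (∏_{j=1}^{h_d-1} M_j)⁻¹·∏_{j=1}^{h_d-1} θ_j(K)`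
for every `d ≥ 1`. -/
theorem pseudoLeja_vdm_lower_bound {p : ℕ} (hp : 1 ≤ p)
    (κ : ℕ → Fin p → ℕ) (hκ : IsGLexEnum κ)
    (K : Set (Fin p → ℂ)) (hKc : IsCompact K) (hKd : Determining K)
    (ξ : ℕ → Fin p → ℂ) (M : ℕ → ℝ) (hPL : IsPseudoLeja κ K ξ M) :
    (∀ k : ℕ, 1 ≤ k →
      ∏ j ∈ Finset.Ico 1 k, cheb κ K j ≤
        (∏ j ∈ Finset.Ico 1 k, M j) * ‖vdm κ k ξ‖) ∧
    (∀ d : ℕ, 1 ≤ d →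
      ‖vdm κ (hdim p d) ξ‖ ≤ Vsup κ K (hdim p d) ∧
      (∏ j ∈ Finset.Ico 1 (hdim p d), M j)⁻¹ *
          ∏ j ∈ Finset.Ico 1 (hdim p d), cheb κ K j ≤
        ‖vdm κ (hdim p d) ξ‖) := by
  obtain ⟨hξK, hM1, hstep, -⟩ := hPL
  have hMnn : ∀ k : ℕ, (0:ℝ) ≤ ∏ j ∈ Finset.Ico 1 k, M j := fun k =>
    Finset.prod_nonneg fun j hj =>
      le_trans zero_le_one (hM1 j (Finset.mem_Ico.1 hj).1)
  have hM1prod : ∀ k : ℕ, (1:ℝ) ≤ ∏ j ∈ Finset.Ico 1 k, M j := by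
    intro k
    have h := Finset.prod_le_prod (s := Finset.Ico 1 k) (f := fun _ => (1:ℝ)) (g := M)
      (fun j _ => zero_le_one) (fun j hj => hM1 j (Finset.mem_Ico.1 hj).1)
    simpa using h
  have main : ∀ k : ℕ, 1 ≤ k →
      ∏ j ∈ Finset.Ico 1 k, cheb κ K j ≤
        (∏ j ∈ Finset.Ico 1 k, M j) * ‖vdm κ k ξ‖ := by
    intro k hk
    induction k, hk using Nat.le_induction with
    | base => simp [vdm_one hκ ξ]
    | succ k hk ih =>
        rw [Finset.prod_Ico_succ_top hk, Finset.prod_Ico_succ_top hk]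
        have hkey : cheb κ K k * ‖vdm κ k ξ‖ ≤
            M k * ‖vdm κ (k + 1) ξ‖ := by
          refine key κ K ξ k _ ?_ (fun z hz => hstep k hk z hz)
          exact mul_nonneg (le_trans zero_le_one (hM1 k hk)) (norm_nonneg _)
        calc (∏ j ∈ Finset.Ico 1 k, cheb κ K j) * cheb κ K k
            ≤ ((∏ j ∈ Finset.Ico 1 k, M j) * ‖vdm κ k ξ‖) * cheb κ K k :=
              mul_le_mul_of_nonneg_right ih (cheb_nonneg κ K k)
          _ = (∏ j ∈ Finset.Ico 1 k, M j) * (cheb κ K k * ‖vdm κ k ξ‖) := by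
              ring
          _ ≤ (∏ j ∈ Finset.Ico 1 k, M j) * (M k * ‖vdm κ (k + 1) ξ‖) :=
              mul_le_mul_of_nonneg_left hkey (hMnn k)
          _ = (∏ j ∈ Finset.Ico 1 k, M j) * M k * ‖vdm κ (k + 1) ξ‖ := by
              ring
  refine ⟨main, fun d hd => ?_⟩
  refine ⟨le_csSup (vdm_bdd κ hKc _) ⟨ξ, hξK, rfl⟩, ?_⟩
  have h1 : 1 ≤ hdim p d := Nat.choose_pos (Nat.le_add_left d p)
  have hpos : (0:ℝ) < ∏ j ∈ Finset.Ico 1 (hdim p d), M j :=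
    lt_of_lt_of_le one_pos (hM1prod _)
  rw [inv_mul_le_iff₀ hpos]
  exact main _ h1

end PseudoLeja
end

section
/- Let p = p_1 + p_2; let κ^{(p)}, κ^{(p_1)}, κ^{(p_2)} be the graded lexicographic enumerations of ℕ^p, ℕ^{p_1}, ℕ^{p_2}, and define φ = (φ_1, φ_2) : ℕ → ℕ² by κ^{(p)}(j) = (κ^{(p_1)}(φ_1(j)), κ^{(p_2)}(φ_2(j))) (concatenation of multi-indices). Let A = (a_j) ⊆ ℂ^{p_1} and B = (b_j) ⊆ ℂ^{p_2} be sequences such that every initial segment A_j = (a_0,…,a_{j−1}) and B_j = (b_0,…,b_{j−1}) is completely ordered unisolvent, let Ω = A ⊕ B be the intertwining sequence ω_j = (a_{φ_1(j)}, b_{φ_2(j)}), and assume every initial segment Ω_j is completely ordered unisolvent. Fix j ∈ ℕ and let c, c', c'' be the coefficient vectors (in the respective monomial bases) of the Lagrange interpolants of e_j^{(p)} at Ω_j, of e_{φ_1(j)}^{(p_1)} at A_{φ_1(j)}, and of e_{φ_2(j)}^{(p_2)} at B_{φ_2(j)}. Then for all z = (z^1, z^2) ∈ ℂ^{p_1}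 × ℂ^{p_2}: e_j^{(p)}(z) − ∑_{t<j} c_t e_t^{(p)}(z) = ( e_{φ_1(j)}^{(p_1)}(z^1) − ∑_{t<φ_1(j)} c'_t e_t^{(p_1)}(z^1) ) · ( e_{φ_2(j)}^{(p_2)}(z^2) − ∑_{t<φ_2(j)} c''_t e_t^{(p_2)}(z^2) ). -/
open scoped BigOperators
open Filter

namespace PseudoLeja

lemma glex_sum_le {p : ℕ} {α β : Fin p → ℕ} (h : GLexLT α β ∨ α = β) :
    (∑ i, α i) ≤ ∑ i, β i := by
  rcases h with (h | ⟨h, _⟩) | rfl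
  · exact le_of_lt h
  · exact le_of_eq h
  · exact le_rfl

lemma glex_asymm {p : ℕ} {α β : Fin p → ℕ} (h : GLexLT α β) : ¬ GLexLT β α := by
  intro h'
  rcases h with h | ⟨hs, k, hk, hklt⟩ <;> rcases h' with h' | ⟨hs', k', hk', hklt'⟩
  · omega
  · omega
  · omega
  · rcases lt_trichotomy k k' with hkk | hkk | hkk
    · have := hk' k hkk; omega
    · subst hkk; omega
    · have := hk k' hkk; omega

lemma enum_reflect {p : ℕ} {κ : ℕ → Fin p → ℕ} (hκ : IsGLexEnum κ) {m n : ℕ}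
    (h : GLexLT (κ m) (κ n)) : m < n := by
  rcases lt_trichotomy m n with h' | rfl | h'
  · exact h'
  · exact absurd h (glex_asymm h)
  · exact absurd (hκ.2 n m h') (glex_asymm h)

lemma glex_append_mono {p₁ p₂ : ℕ} {α₁ β₁ : Fin p₁ → ℕ} {α₂ β₂ : Fin p₂ → ℕ}
    (h1 : GLexLT α₁ β₁ ∨ α₁ = β₁) (h2 : GLexLT α₂ β₂ ∨ α₂ = β₂)
    (hne : ¬ (α₁ = β₁ ∧ α₂ = β₂)) :
    GLexLT (Fin.append α₁ α₂) (Fin.append β₁ β₂) := by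
  have hsA : (∑ i, Fin.append α₁ α₂ i) = (∑ i, α₁ i) + ∑ i, α₂ i := by
    rw [Fin.sum_univ_add]; simp
  have hsB : (∑ i, Fin.append β₁ β₂ i) = (∑ i, β₁ i) + ∑ i, β₂ i := by
    rw [Fin.sum_univ_add]; simp
  have h2le := glex_sum_le h2
  have h1le := glex_sum_le h1
  rcases h1 with (h1lt | ⟨h1eq, k, hk, hklt⟩) | rfl
  · left; omega
  · rcases Nat.lt_or_ge (∑ i, α₂ i) (∑ i, β₂ i) with h2lt | h2ge
    · left; omega
    · right
      refine ⟨by omega, Fin.castAdd p₂ k, ?_, ?_⟩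
      · intro i hi
        have hilt : (i : ℕ) < p₁ := lt_of_lt_of_le (by exact hi) (Nat.le_of_lt_succ (Nat.lt_succ_of_lt k.isLt)) |>.trans_le le_rfl
        have : i = Fin.castAdd p₂ ⟨(i : ℕ), hilt⟩ := by apply Fin.ext; rfl
        rw [this, Fin.append_left, Fin.append_left]
        exact hk _ (by simpa [Fin.lt_def] using hi)
      · rw [Fin.append_left, Fin.append_left]; exact hklt
  · rcases h2 with (h2lt | ⟨h2eq, k, hk, hklt⟩) | rfl
    · left; omega
    · right
      refine ⟨by omega, Fin.natAdd p₁ k, ?_, ?_⟩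
      · intro i hi
        rcases Nat.lt_or_ge (i : ℕ) p₁ with hip | hip
        · have : i = Fin.castAdd p₂ ⟨(i : ℕ), hip⟩ := by apply Fin.ext; rfl
          rw [this, Fin.append_left, Fin.append_left]
        · have hv : (i : ℕ) - p₁ < p₂ := by omega
          have : i = Fin.natAdd p₁ ⟨(i : ℕ) - p₁, hv⟩ := by apply Fin.ext; simp; omega
          rw [this, Fin.append_right, Fin.append_right]
          apply hk
          have hi' : (i : ℕ) < p₁ + (k : ℕ) := hi
          simp [Fin.lt_def]; omega
      · rw [Fin.append_right, Fin.append_right]; exact hklt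
    · exact absurd ⟨rfl, rfl⟩ hne

lemma mono_split {p₁ p₂ : ℕ} {κ : ℕ → Fin (p₁ + p₂) → ℕ} {κ₁ : ℕ → Fin p₁ → ℕ}
    {κ₂ : ℕ → Fin p₂ → ℕ} {u s t : ℕ} (h : κ u = Fin.append (κ₁ s) (κ₂ t))
    (z₁ : Fin p₁ → ℂ) (z₂ : Fin p₂ → ℂ) :
    mono κ u (Fin.append z₁ z₂) = mono κ₁ s z₁ * mono κ₂ t z₂ := by
  unfold mono
  rw [h, Fin.prod_univ_add]
  simp


/-- for the intertwining sequence `Ω = A ⊕ B`, the Newton remainder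
`e_j^{(p)} - L_{Ω_j} e_j^{(p)}` factors as the product of the Newton remainders
`e_{φ₁(j)}^{(p₁)} - L_{A_{φ₁(j)}} e_{φ₁(j)}^{(p₁)}` and
`e_{φ₂(j)}^{(p₂)} - L_{B_{φ₂(j)}} e_{φ₂(j)}^{(p₂)}`. -/
theorem newton_remainder_intertwining {p₁ p₂ : ℕ} (hp₁ : 1 ≤ p₁) (hp₂ : 1 ≤ p₂)
    (κ₁ : ℕ → Fin p₁ → ℕ) (κ₂ : ℕ → Fin p₂ → ℕ) (κ : ℕ → Fin (p₁ + p₂) → ℕ)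
    (hκ₁ : IsGLexEnum κ₁) (hκ₂ : IsGLexEnum κ₂) (hκ : IsGLexEnum κ)
    (φ₁ φ₂ : ℕ → ℕ)
    (hφ : ∀ j : ℕ, κ j = Fin.append (κ₁ (φ₁ j)) (κ₂ (φ₂ j)))
    (a : ℕ → Fin p₁ → ℂ) (b : ℕ → Fin p₂ → ℂ)
    (ha : ∀ j : ℕ, 1 ≤ j → vdm κ₁ j a ≠ 0)
    (hb : ∀ j : ℕ, 1 ≤ j → vdm κ₂ j b ≠ 0)
    (ω : ℕ → Fin (p₁ + p₂) → ℂ)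
    (hω : ∀ j : ℕ, ω j = Fin.append (a (φ₁ j)) (b (φ₂ j)))
    (hΩ : ∀ j : ℕ, 1 ≤ j → vdm κ j ω ≠ 0)
    (j : ℕ) (c c' c'' : ℕ → ℂ)
    (hc : ∀ i : ℕ, i < j →
      mono κ j (ω i) = ∑ t ∈ Finset.range j, c t * mono κ t (ω i))
    (hc' : ∀ i : ℕ, i < φ₁ j →
      mono κ₁ (φ₁ j) (a i) = ∑ t ∈ Finset.range (φ₁ j), c' t * mono κ₁ t (a i))
    (hc'' : ∀ i : ℕ, i < φ₂ j →
      mono κ₂ (φ₂ j) (b i) = ∑ t ∈ Finset.range (φ₂ j), c'' t * mono κ₂ t (b i)) :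
    ∀ (z₁ : Fin p₁ → ℂ) (z₂ : Fin p₂ → ℂ),
      mono κ j (Fin.append z₁ z₂) -
          ∑ t ∈ Finset.range j, c t * mono κ t (Fin.append z₁ z₂) =
        (mono κ₁ (φ₁ j) z₁ - ∑ t ∈ Finset.range (φ₁ j), c' t * mono κ₁ t z₁) *
        (mono κ₂ (φ₂ j) z₂ - ∑ t ∈ Finset.range (φ₂ j), c'' t * mono κ₂ t z₂) := by
  classical
  have hinj := hκ.1.1
  choose idx hidx using fun q : ℕ × ℕ => hκ.1.2 (Fin.append (κ₁ q.1) (κ₂ q.2))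
  set s₀ := φ₁ j with hs₀def
  set t₀ := φ₂ j with ht₀def
  have hidxtop : idx (s₀, t₀) = j := hinj (by rw [hidx, hφ j])
  have hκ₁le : ∀ {s s' : ℕ}, s ≤ s' → GLexLT (κ₁ s) (κ₁ s') ∨ κ₁ s = κ₁ s' := by
    intro s s' h
    rcases h.lt_or_eq with h | rfl
    · exact Or.inl (hκ₁.2 _ _ h)
    · exact Or.inr rfl
  have hκ₂le : ∀ {s s' : ℕ}, s ≤ s' → GLexLT (κ₂ s) (κ₂ s') ∨ κ₂ s = κ₂ s' := by
    intro s s' h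
    rcases h.lt_or_eq with h | rfl
    · exact Or.inl (hκ₂.2 _ _ h)
    · exact Or.inr rfl
  have hidxlt : ∀ s t : ℕ, s ≤ s₀ → t ≤ t₀ → ¬(s = s₀ ∧ t = t₀) → idx (s, t) < j := by
    intro s t hs ht hne
    apply enum_reflect hκ
    rw [hidx, hφ j]
    refine glex_append_mono (hκ₁le hs) (hκ₂le ht) ?_
    rintro ⟨h1, h2⟩
    exact hne ⟨hκ₁.1.1 h1, hκ₂.1.1 h2⟩
  set γ₁ : ℕ → ℂ := fun s => if s = s₀ then 1 else -c' s with hγ₁def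
  set γ₂ : ℕ → ℂ := fun t => if t = t₀ then 1 else -c'' t with hγ₂def
  have hfac1 : ∀ w₁ : Fin p₁ → ℂ,
      mono κ₁ s₀ w₁ - ∑ t ∈ Finset.range s₀, c' t * mono κ₁ t w₁
        = ∑ s ∈ Finset.range (s₀ + 1), γ₁ s * mono κ₁ s w₁ := by
    intro w₁
    rw [Finset.sum_range_succ]
    have h1 : γ₁ s₀ = 1 := if_pos rfl
    have h2 : ∑ s ∈ Finset.range s₀, γ₁ s * mono κ₁ s w₁
        = ∑ s ∈ Finset.range s₀, -(c' s * mono κ₁ s w₁) := by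
      refine Finset.sum_congr rfl fun s hs => ?_
      have hne : s ≠ s₀ := Nat.ne_of_lt (Finset.mem_range.mp hs)
      rw [hγ₁def]
      simp only [if_neg hne, neg_mul]
    rw [h1, one_mul, h2, Finset.sum_neg_distrib]
    ring
  have hfac2 : ∀ w₂ : Fin p₂ → ℂ,
      mono κ₂ t₀ w₂ - ∑ t ∈ Finset.range t₀, c'' t * mono κ₂ t w₂
        = ∑ t ∈ Finset.range (t₀ + 1), γ₂ t * mono κ₂ t w₂ := by
    intro w₂
    rw [Finset.sum_range_succ]
    have h1 : γ₂ t₀ = 1 := if_pos rfl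
    have h2 : ∑ t ∈ Finset.range t₀, γ₂ t * mono κ₂ t w₂
        = ∑ t ∈ Finset.range t₀, -(c'' t * mono κ₂ t w₂) := by
      refine Finset.sum_congr rfl fun t ht => ?_
      have hne : t ≠ t₀ := Nat.ne_of_lt (Finset.mem_range.mp ht)
      rw [hγ₂def]
      simp only [if_neg hne, neg_mul]
    rw [h1, one_mul, h2, Finset.sum_neg_distrib]
    ring
  set S : Finset (ℕ × ℕ) := (Finset.range (s₀ + 1)) ×ˢ (Finset.range (t₀ + 1)) with hSdef
  have htop : (s₀, t₀) ∈ S := by simp [hSdef]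
  set E : ℕ → ℂ := fun u =>
    ∑ q ∈ S.erase (s₀, t₀), if idx q = u then γ₁ q.1 * γ₂ q.2 else 0 with hEdef
  have hqlt : ∀ q ∈ S.erase (s₀, t₀), idx q < j := by
    intro q hq
    obtain ⟨hqne, hqS⟩ := Finset.mem_erase.mp hq
    obtain ⟨hq1, hq2⟩ := Finset.mem_product.mp hqS
    have h1 : q.1 ≤ s₀ := Nat.lt_succ_iff.mp (Finset.mem_range.mp hq1)
    have h2 : q.2 ≤ t₀ := Nat.lt_succ_iff.mp (Finset.mem_range.mp hq2)
    have : ¬(q.1 = s₀ ∧ q.2 = t₀) := by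
      rintro ⟨e1, e2⟩
      exact hqne (Prod.ext e1 e2)
    have := hidxlt q.1 q.2 h1 h2 this
    simpa using this
  have key : ∀ (w₁ : Fin p₁ → ℂ) (w₂ : Fin p₂ → ℂ),
      (mono κ₁ s₀ w₁ - ∑ t ∈ Finset.range s₀, c' t * mono κ₁ t w₁) *
      (mono κ₂ t₀ w₂ - ∑ t ∈ Finset.range t₀, c'' t * mono κ₂ t w₂)
      = mono κ j (Fin.append w₁ w₂)
        + ∑ u ∈ Finset.range j, E u * mono κ u (Fin.append w₁ w₂) := by
    intro w₁ w₂
    rw [hfac1, hfac2, Finset.sum_mul_sum]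
    rw [show (∑ s ∈ Finset.range (s₀+1), ∑ t ∈ Finset.range (t₀+1),
        (γ₁ s * mono κ₁ s w₁) * (γ₂ t * mono κ₂ t w₂))
      = ∑ q ∈ S, (γ₁ q.1 * mono κ₁ q.1 w₁) * (γ₂ q.2 * mono κ₂ q.2 w₂) from
        (Finset.sum_product' _ _ _).symm]
    rw [← Finset.add_sum_erase _ _ htop]
    congr 1
    · rw [mono_split (by rw [hφ j]) w₁ w₂]
      have h1 : γ₁ s₀ = 1 := if_pos rfl
      have h2 : γ₂ t₀ = 1 := if_pos rfl
      rw [h1, h2]; ring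
    · rw [show (∑ u ∈ Finset.range j, E u * mono κ u (Fin.append w₁ w₂))
        = ∑ u ∈ Finset.range j, ∑ q ∈ S.erase (s₀, t₀),
            (if idx q = u then (γ₁ q.1 * γ₂ q.2) * mono κ u (Fin.append w₁ w₂) else 0) from by
          refine Finset.sum_congr rfl fun u _ => ?_
          rw [hEdef, Finset.sum_mul]
          refine Finset.sum_congr rfl fun q _ => ?_
          rw [ite_mul, zero_mul]]
      rw [Finset.sum_comm]
      refine (Finset.sum_congr rfl fun q hq => ?_).symm
      rw [Finset.sum_ite_eq]
      rw [if_pos (Finset.mem_range.mpr (hqlt q hq))]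
      rw [mono_split (hidx q) w₁ w₂]
      ring
  have hdvec : ∀ i : ℕ, i < j →
      ∑ u ∈ Finset.range j, (E u + c u) * mono κ u (ω i) = 0 := by
    intro i hi
    have h1 : φ₁ i < s₀ ∨ φ₂ i < t₀ := by
      by_contra h
      push_neg at h
      obtain ⟨hs, ht⟩ := h
      have hji : j < i ∨ j = i := by
        rcases eq_or_lt_of_le hs with hs' | hs'
        · rcases eq_or_lt_of_le ht with ht' | ht'
          · right
            exact hinj (by rw [hφ i, hφ j, show φ₁ j = φ₁ i from hs', show φ₂ j = φ₂ i from ht'])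
          · left
            apply enum_reflect hκ
            rw [hφ i, hφ j]
            exact glex_append_mono (Or.inr (by rw [show φ₁ j = φ₁ i from hs'])) (Or.inl (hκ₂.2 _ _ ht'))
              (by rintro ⟨_, h2⟩; exact absurd (hκ₂.1.1 h2) (by omega))
        · left
          apply enum_reflect hκ
          rw [hφ i, hφ j]
          refine glex_append_mono (Or.inl (hκ₁.2 _ _ hs')) (hκ₂le ht) ?_
          rintro ⟨h1', _⟩
          exact absurd (hκ₁.1.1 h1') (by omega)
      omega
    have hP : (mono κ₁ s₀ (a (φ₁ i)) - ∑ t ∈ Finset.range s₀, c' t * mono κ₁ t (a (φ₁ i))) *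
        (mono κ₂ t₀ (b (φ₂ i)) - ∑ t ∈ Finset.range t₀, c'' t * mono κ₂ t (b (φ₂ i))) = 0 := by
      rcases h1 with h1 | h1
      · rw [hc' _ h1, sub_self, zero_mul]
      · rw [hc'' _ h1, sub_self, mul_zero]
    have hkey := key (a (φ₁ i)) (b (φ₂ i))
    rw [hP, ← hω i] at hkey
    have hcj := hc i hi
    have hsplit : ∑ u ∈ Finset.range j, (E u + c u) * mono κ u (ω i)
        = (∑ u ∈ Finset.range j, E u * mono κ u (ω i))
          + ∑ u ∈ Finset.range j, c u * mono κ u (ω i) := by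
      rw [← Finset.sum_add_distrib]
      exact Finset.sum_congr rfl fun u _ => by ring
    rw [hsplit]
    linear_combination -hkey - hcj
  -- matrix step
  set Mt : Matrix (Fin j) (Fin j) ℂ :=
    Matrix.of fun i u : Fin j => mono κ (u : ℕ) (ω (i : ℕ)) with hMt
  have hdet : Mt.det ≠ 0 := by
    rcases Nat.eq_zero_or_pos j with rfl | hj
    · simp [Matrix.det_fin_zero]
    · exact hΩ j hj
  have hd0 : ∀ u : ℕ, u < j → E u + c u = 0 := by
    have hmv : Mt.mulVec (fun u : Fin j => E (u : ℕ) + c (u : ℕ)) = 0 := by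
      funext i
      have h := hdvec i i.isLt
      rw [Finset.sum_range] at h
      simpa [Matrix.mulVec, dotProduct, hMt, mul_comm] using h
    intro u hu
    have := Matrix.eq_zero_of_mulVec_eq_zero hdet hmv
    exact congrFun this ⟨u, hu⟩
  intro z₁ z₂
  rw [key z₁ z₂]
  have hE : ∀ u ∈ Finset.range j, E u * mono κ u (Fin.append z₁ z₂)
      = -(c u * mono κ u (Fin.append z₁ z₂)) := by
    intro u hu
    have h := hd0 u (Finset.mem_range.mp hu)
    have : E u = -c u := by linear_combination h
    rw [this]; ring
  rw [Finset.sum_congr rfl hE, Finset.sum_neg_distrib]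
  ring

end PseudoLeja
end
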